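/- Let (p_y)_{y∈ℕ} and (p_{y,z})_{0≤z≤y} be families of real numbers in [0,1] satisfying: (1) p_0 = 0; (2) p_1 = 1; (3) for all y,z with 0 ≤ z ≤ y, p_{y,z} ≥ (1/2^z) · ∑_{ℓ=0}^{z} C(z,ℓ) · p_{y-ℓ}; (4) for all y ≥ 2, p_y = min{ p_{y,z} | 1 ≤ z ≤ y }. Then for all y ≥ 1, p_y ≥ 2/3. -/

import Mathlib

theorem stmt_2 (p : ℕ → ℝ) (q : ℕ → ℕ → ℝ)
    (hp01 : ∀ y, p y ∈ Set.Icc (0 : ℝ) 1)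
    (hq01 : ∀ y z, z ≤ y → q y z ∈ Set.Icc (0 : ℝ) 1)
    (h0 : p 0 = 0) (h1 : p 1 = 1)
    (h3 : ∀ y z, z ≤ y →
      q y z ≥ (1 / 2 ^ z : ℝ) * ∑ ℓ ∈ Finset.range (z + 1), (z.choose ℓ : ℝ) * p (y - ℓ))
    (h4 : ∀ y, 2 ≤ y → IsLeast {x : ℝ | ∃ z, 1 ≤ z ∧ z ≤ y ∧ x = q y z} (p y)) :
    ∀ y, 1 ≤ y → p y ≥ 2 / 3 := by
  intro y
  induction y using Nat.strong_induction_on with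
  | _ y IH =>
  intro hy
  by_cases hy2 : y < 2
  · have : y = 1 := by omega
    subst this
    rw [h1]; norm_num
  · push_neg at hy2
    obtain ⟨z, hz1, hzy, hpq⟩ := (h4 y hy2).1
    have key := h3 y z hzy
    rw [Finset.sum_range_succ'] at key
    simp only [Nat.choose_zero_right, Nat.cast_one, one_mul, Nat.sub_zero] at key
    set T := ∑ i ∈ Finset.range z, ((z.choose (i+1) : ℝ)) * p (y - (i+1)) with hT
    have hchoose : ∑ i ∈ Finset.range z, ((z.choose (i+1) : ℝ)) = 2 ^ z - 1 := by
      have hnat := Nat.sum_range_choose z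
      have h2' : ∑ ℓ ∈ Finset.range (z+1), ((z.choose ℓ : ℝ)) = 2 ^ z := by
        exact_mod_cast congrArg (Nat.cast (R := ℝ)) hnat
      rw [Finset.sum_range_succ'] at h2'
      simp only [Nat.choose_zero_right, Nat.cast_one] at h2'
      linarith
    have hTbound : T ≥ 2/3 * (2 ^ z - 1) := by
      rcases lt_or_eq_of_le hzy with hlt | heq
      · have hstep : ∑ i ∈ Finset.range z, ((z.choose (i+1) : ℝ)) * (2/3) ≤ T := by
          rw [hT]
          apply Finset.sum_le_sum
          intro i hi
          have hi' := Finset.mem_range.mp hi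
          have h1' : 1 ≤ y - (i+1) := by omega
          have h2'' : y - (i+1) < y := by omega
          have hIH := IH _ h2'' h1'
          have hc : (0:ℝ) ≤ (z.choose (i+1) : ℝ) := Nat.cast_nonneg _
          nlinarith
        rw [← Finset.sum_mul, hchoose] at hstep
        linarith
      · subst heq
        obtain ⟨m, rfl⟩ : ∃ m, z = m + 2 := ⟨z - 2, by omega⟩
        rw [hT, Finset.sum_range_succ, Finset.sum_range_succ]
        have e1 : m + 2 - (m + 1 + 1) = 0 := by omega
        have e2 : m + 2 - (m + 1) = 1 := by omega
        rw [e1, e2, h0, h1]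
        have hc1 : ((m+2).choose (m+1+1) : ℝ) = 1 := by
          norm_num
        have hc2 : ((m+2).choose (m+1) : ℝ) = (m : ℝ) + 2 := by
          rw [show m + 2 = (m+1) + 1 from rfl, Nat.choose_succ_self_right]
          push_cast; ring
        rw [hc1, hc2]
        have hchoose' : ∑ i ∈ Finset.range m, (((m+2).choose (i+1) : ℝ)) =
            2 ^ (m+2) - 1 - ((m:ℝ) + 2) - 1 := by
          rw [Finset.sum_range_succ, Finset.sum_range_succ, hc1, hc2] at hchoose
          linarith
        have hstep : ∑ i ∈ Finset.range m, (((m+2).choose (i+1) : ℝ)) * (2/3) ≤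
            ∑ i ∈ Finset.range m, (((m+2).choose (i+1) : ℝ)) * p (m + 2 - (i+1)) := by
          apply Finset.sum_le_sum
          intro i hi
          have hi' := Finset.mem_range.mp hi
          have h1' : 1 ≤ m + 2 - (i+1) := by omega
          have h2'' : m + 2 - (i+1) < m + 2 := by omega
          have hIH := IH _ h2'' h1'
          have hc : (0:ℝ) ≤ (((m+2):ℕ).choose (i+1) : ℝ) := Nat.cast_nonneg _
          nlinarith
        rw [← Finset.sum_mul, hchoose'] at hstep
        have hm : (0:ℝ) ≤ (m:ℝ) := Nat.cast_nonneg _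
        linarith
    rw [← hpq] at key
    have hpos : (0:ℝ) < 2 ^ z := by positivity
    have hpow : (2:ℝ) ≤ 2 ^ z := by
      calc (2:ℝ) = 2 ^ 1 := by norm_num
        _ ≤ 2 ^ z := by exact pow_le_pow_right₀ (by norm_num) hz1
    rw [ge_iff_le, one_div, inv_mul_le_iff₀ hpos] at key
    nlinarith [key, hTbound, hpow]
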